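/- Let (Ω, 𝒜, P) be a probability space, X, Y, Z : Ω → ℝ random variables such that Y and Z are conditionally independent given X, and let φ : [−1,1] → ℝ be convex. Then ∫_{ℝ×ℝ} ∫_ℝ φ(F_{Y|Z=z₁}(y) − F_{Y|Z=z₂}(y)) dP^Y(y) d(P^Z ⊗ P^Z)(z₁,z₂) ≤ ∫_{ℝ×ℝ} ∫_ℝ φ(F_{Y|X=x₁}(y) − F_{Y|X=x₂}(y)) dP^Y(y) d(P^X ⊗ P^X)(x₁,x₂). -/

import Mathlib

open MeasureTheory ProbabilityTheory Filter Set
open scoped ENNReal Topology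

/-- A convex function on `[-1,1]` is bounded there. -/
lemma convexOn_Icc_bounded {φ : ℝ → ℝ} (hφ : ConvexOn ℝ (Set.Icc (-1 : ℝ) 1) φ) :
    ∃ C : ℝ, 0 ≤ C ∧ ∀ t ∈ Set.Icc (-1 : ℝ) 1, |φ t| ≤ C := by
  set M : ℝ := max (φ (-1)) (φ 1) with hM
  have hub : ∀ t ∈ Set.Icc (-1 : ℝ) 1, φ t ≤ M := by
    intro t ht
    obtain ⟨ht1, ht2⟩ := ht
    have ha : (0:ℝ) ≤ (1 - t) / 2 := by linarith
    have hb : (0:ℝ) ≤ (1 + t) / 2 := by linarith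
    have hab : (1 - t) / 2 + (1 + t) / 2 = 1 := by ring
    have h := hφ.2 (by constructor <;> norm_num : (-1:ℝ) ∈ Set.Icc (-1:ℝ) 1)
      (by constructor <;> norm_num : (1:ℝ) ∈ Set.Icc (-1:ℝ) 1) ha hb hab
    simp only [smul_eq_mul] at h
    rw [show (1 - t) / 2 * (-1 : ℝ) + (1 + t) / 2 * (1 : ℝ) = t by ring] at h
    calc φ t ≤ (1 - t) / 2 * φ (-1) + (1 + t) / 2 * φ 1 := h
      _ ≤ (1 - t) / 2 * M + (1 + t) / 2 * M := by
          gcongr <;> [exact le_max_left _ _; exact le_max_right _ _]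
      _ = M := by ring
  have hlb : ∀ t ∈ Set.Icc (-1 : ℝ) 1, 2 * φ 0 - M ≤ φ t := by
    intro t ht
    have hnt : -t ∈ Set.Icc (-1:ℝ) 1 := by
      obtain ⟨h1, h2⟩ := ht; constructor <;> linarith
    have h := hφ.2 ht hnt (by norm_num : (0:ℝ) ≤ (1:ℝ)/2) (by norm_num : (0:ℝ) ≤ (1:ℝ)/2)
      (by norm_num : (1:ℝ)/2 + 1/2 = 1)
    simp only [smul_eq_mul] at h
    rw [show (1:ℝ)/2 * t + (1:ℝ)/2 * (-t) = 0 by ring] at h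
    have := hub _ hnt
    linarith
  refine ⟨|M| + |2 * φ 0 - M|, by positivity, fun t ht => ?_⟩
  rw [abs_le]
  constructor
  · have := hlb t ht
    have : -(|2 * φ 0 - M|) ≤ φ t := le_trans (neg_abs_le _) this
    linarith [abs_nonneg M]
  · have := hub t ht
    have : φ t ≤ |M| := le_trans this (le_abs_self _)
    linarith [abs_nonneg (2 * φ 0 - M)]

/-- Supporting line at an interior point of the interval of convexity. -/
lemma convexOn_Icc_exists_supporting {φ : ℝ → ℝ}
    (hφ : ConvexOn ℝ (Set.Icc (-1 : ℝ) 1) φ) {m : ℝ} (hm : m ∈ Set.Ioo (-1 : ℝ) 1) :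
    ∃ c : ℝ, ∀ t ∈ Set.Icc (-1 : ℝ) 1, φ m + c * (t - m) ≤ φ t := by
  obtain ⟨hm1, hm2⟩ := hm
  set S : Set ℝ := (fun t => (φ m - φ t) / (m - t)) '' Set.Ico (-1 : ℝ) m with hS
  have hmIcc : m ∈ Set.Icc (-1:ℝ) 1 := ⟨le_of_lt hm1, le_of_lt hm2⟩
  have hne : S.Nonempty := ⟨_, ⟨-1, ⟨le_refl _, hm1⟩, rfl⟩⟩
  have key : ∀ s ∈ Set.Ico (-1:ℝ) m, ∀ u ∈ Set.Icc (-1:ℝ) 1, m < u →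
      (φ m - φ s) / (m - s) ≤ (φ u - φ m) / (u - m) := by
    intro s hs u hu hmu
    have := hφ.slope_mono_adjacent (x := s) (y := m) (z := u)
      ⟨hs.1, le_trans (le_of_lt hs.2) (le_of_lt hm2)⟩ hu hs.2 hmu
    convert this using 2 <;> ring
  have hbdd : BddAbove S := by
    refine ⟨(φ 1 - φ m) / (1 - m), ?_⟩
    rintro _ ⟨s, hs, rfl⟩
    exact key s hs 1 ⟨by norm_num, le_refl _⟩ hm2
  set c := sSup S with hc
  refine ⟨c, fun t ht => ?_⟩
  rcases lt_trichotomy t m with h | h | h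
  · -- t < m : slope(t, m) ≤ c
    have hmem : (φ m - φ t) / (m - t) ≤ c :=
      le_csSup hbdd ⟨t, ⟨ht.1, h⟩, rfl⟩
    have hpos : (0:ℝ) < m - t := by linarith
    rw [div_le_iff₀ hpos] at hmem
    nlinarith
  · subst h; simp
  · -- m < t : c ≤ slope(m, t)
    have hle : c ≤ (φ t - φ m) / (t - m) := by
      refine csSup_le hne ?_
      rintro _ ⟨s, hs, rfl⟩
      exact key s hs t ht h
    have hpos : (0:ℝ) < t - m := by linarith
    rw [le_div_iff₀ hpos] at hle
    nlinarith

/-- A measurable function agreeing with `φ` on `[-1,1]`. -/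
lemma convexOn_Icc_exists_measurable {φ : ℝ → ℝ}
    (hφ : ConvexOn ℝ (Set.Icc (-1 : ℝ) 1) φ) :
    ∃ ψ : ℝ → ℝ, Measurable ψ ∧ ∀ t ∈ Set.Icc (-1 : ℝ) 1, ψ t = φ t := by
  have hconv : ConvexOn ℝ (Set.Ioo (-1 : ℝ) 1) φ :=
    hφ.subset Set.Ioo_subset_Icc_self (convex_Ioo _ _)
  have hcont : ContinuousOn φ (Set.Ioo (-1 : ℝ) 1) := hconv.continuousOn isOpen_Ioo
  have hemb : MeasurableEmbedding (Subtype.val : Set.Ioo (-1 : ℝ) 1 → ℝ) :=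
    MeasurableEmbedding.subtype_coe measurableSet_Ioo
  set E : ℝ → ℝ := Function.extend (Subtype.val : Set.Ioo (-1 : ℝ) 1 → ℝ)
    (fun u => φ u.val) (fun _ => 0) with hE
  have hEmeas : Measurable E :=
    hemb.measurable_extend (continuousOn_iff_continuous_restrict.mp hcont).measurable
      measurable_const
  refine ⟨fun t => if t = -1 then φ (-1) else if t = 1 then φ 1 else E t,
    ?_, fun t ht => ?_⟩
  · exact Measurable.ite (measurableSet_singleton _) measurable_const
      (Measurable.ite (measurableSet_singleton _) measurable_const hEmeas)
  · by_cases h1 : t = -1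
    · simp [h1]
    by_cases h2 : t = 1
    · subst h2; norm_num
    have htIoo : t ∈ Set.Ioo (-1 : ℝ) 1 := by
      obtain ⟨ha, hb⟩ := ht
      exact ⟨lt_of_le_of_ne ha (Ne.symm h1), lt_of_le_of_ne hb h2⟩
    simp only [h1, h2, if_false]
    have := Subtype.val_injective.extend_apply (fun u : Set.Ioo (-1:ℝ) 1 => φ u.val)
      (fun _ => 0) ⟨t, htIoo⟩
    simpa [hE] using this

/-- Jensen's inequality for a convex function on `[-1,1]`, probability measure version,
without continuity assumptions. -/
lemma convexOn_Icc_map_integral_le {α : Type*} [MeasurableSpace α] (μ : Measure α)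
    [IsProbabilityMeasure μ] {φ : ℝ → ℝ} (hφ : ConvexOn ℝ (Set.Icc (-1 : ℝ) 1) φ)
    {g : α → ℝ} (hmem : ∀ a, g a ∈ Set.Icc (-1 : ℝ) 1)
    (hgi : Integrable g μ) (hφg : Integrable (fun a => φ (g a)) μ) :
    φ (∫ a, g a ∂μ) ≤ ∫ a, φ (g a) ∂μ := by
  set m := ∫ a, g a ∂μ with hm
  have hle1 : m ≤ 1 := by
    calc m ≤ ∫ _, (1:ℝ) ∂μ := integral_mono hgi (integrable_const _) (fun a => (hmem a).2)
      _ = 1 := by simp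
  have hge1 : -1 ≤ m := by
    calc (-1:ℝ) = ∫ _, (-1:ℝ) ∂μ := by simp
      _ ≤ m := integral_mono (integrable_const _) hgi (fun a => (hmem a).1)
  rcases eq_or_lt_of_le hle1 with h1 | h1
  · -- m = 1 : g = 1 a.e.
    have hae : (fun a => 1 - g a) =ᵐ[μ] 0 := by
      have hint : Integrable (fun a => 1 - g a) μ := (integrable_const _).sub hgi
      have h0 : ∫ a, (1 - g a) ∂μ = 0 := by
        rw [integral_sub (integrable_const _) hgi]; simp [← hm, h1]
      have := (integral_eq_zero_iff_of_nonneg (fun a => by simp [(hmem a).2]) hint).mp h0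
      exact this
    have hgae : g =ᵐ[μ] fun _ => 1 := by
      filter_upwards [hae] with a ha
      have : 1 - g a = 0 := ha
      linarith
    have : ∫ a, φ (g a) ∂μ = φ 1 := by
      rw [integral_congr_ae (hgae.mono fun a ha => by rw [ha])]; simp
    rw [this, h1]
  rcases eq_or_lt_of_le hge1 with h2 | h2
  · -- m = -1 : g = -1 a.e.
    have hae : (fun a => g a + 1) =ᵐ[μ] 0 := by
      have hint : Integrable (fun a => g a + 1) μ := hgi.add (integrable_const _)
      have h0 : ∫ a, (g a + 1) ∂μ = 0 := by
        rw [integral_add hgi (integrable_const _)]; simp [← hm, ← h2]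
      exact (integral_eq_zero_iff_of_nonneg (fun a => by
        have := (hmem a).1; simp only [Pi.zero_apply]; linarith) hint).mp h0
    have hgae : g =ᵐ[μ] fun _ => -1 := by
      filter_upwards [hae] with a ha
      have : g a + 1 = 0 := ha
      linarith
    have : ∫ a, φ (g a) ∂μ = φ (-1) := by
      rw [integral_congr_ae (hgae.mono fun a ha => by rw [ha])]; simp
    rw [this, ← h2]
  -- interior case
  obtain ⟨c, hc⟩ := convexOn_Icc_exists_supporting hφ ⟨h2, h1⟩
  have hlin : Integrable (fun a => φ m + c * (g a - m)) μ :=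
    (integrable_const _).add ((hgi.sub (integrable_const _)).const_mul c)
  calc φ m = ∫ a, (φ m + c * (g a - m)) ∂μ := by
        have : ∫ a, (φ m + c * (g a - m)) ∂μ =
            ∫ a, φ m ∂μ + ∫ a, c * (g a - m) ∂μ :=
          integral_add (integrable_const _) ((hgi.sub (integrable_const _)).const_mul c)
        rw [this, integral_const_mul, integral_sub hgi (integrable_const _)]
        simp [← hm]
    _ ≤ ∫ a, φ (g a) ∂μ := integral_mono hlin hφg (fun a => hc _ (hmem a))

lemma integrable_of_bound {α : Type*} [MeasurableSpace α] {μ : Measure α} [IsFiniteMeasure μ]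
    {f : α → ℝ} (hf : AEStronglyMeasurable f μ) (C : ℝ) (h : ∀ a, |f a| ≤ C) :
    Integrable f μ :=
  Integrable.mono' (integrable_const C) hf (Filter.Eventually.of_forall fun a => by
    simpa [Real.norm_eq_abs] using h a)

lemma abs_integral_le_bound {α : Type*} [MeasurableSpace α] (μ : Measure α)
    [IsProbabilityMeasure μ] {f : α → ℝ} {C : ℝ} (h : ∀ a, |f a| ≤ C) :
    |∫ a, f a ∂μ| ≤ C := by
  have := norm_integral_le_of_norm_le_const (μ := μ) (f := f) (C := C)
    (Filter.Eventually.of_forall fun a => by simpa [Real.norm_eq_abs] using h a)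
  simpa [Real.norm_eq_abs, measure_univ] using this

lemma kernel_toReal_mem_Icc (κ : Kernel ℝ ℝ) [IsMarkovKernel κ] (x : ℝ) (s : Set ℝ) :
    (κ x s).toReal ∈ Set.Icc (0:ℝ) 1 :=
  ⟨ENNReal.toReal_nonneg, by
    rw [show (1:ℝ) = (1:ℝ≥0∞).toReal from rfl]
    exact ENNReal.toReal_mono ENNReal.one_ne_top prob_le_one⟩

lemma sub_mem_Icc_of_mem_Icc01 {a b : ℝ} (ha : a ∈ Set.Icc (0:ℝ) 1) (hb : b ∈ Set.Icc (0:ℝ) 1) :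
    a - b ∈ Set.Icc (-1:ℝ) 1 :=
  ⟨by linarith [ha.1, hb.2], by linarith [ha.2, hb.1]⟩

lemma measurable_kernel_Iic (κ : Kernel ℝ ℝ) [IsSFiniteKernel κ] :
    Measurable fun p : ℝ × ℝ => κ p.1 (Set.Iic p.2) := by
  have ht : MeasurableSet {q : (ℝ × ℝ) × ℝ | q.2 ≤ q.1.2} :=
    measurableSet_le measurable_snd measurable_fst.snd
  set κ' : Kernel (ℝ × ℝ) ℝ := κ.comap (Prod.fst : ℝ × ℝ → ℝ) measurable_fst with hκ'
  have h := Kernel.measurable_kernel_prodMk_left (κ := κ') ht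
  have heq : (fun p : ℝ × ℝ => κ' p (Prod.mk p ⁻¹' {q : (ℝ × ℝ) × ℝ | q.2 ≤ q.1.2}))
      = fun p : ℝ × ℝ => κ p.1 (Set.Iic p.2) := by
    funext p
    have hset : Prod.mk p ⁻¹' {q : (ℝ × ℝ) × ℝ | q.2 ≤ q.1.2} = Set.Iic p.2 := by
      ext b; simp
    rw [hset, hκ', Kernel.comap_apply]
  rw [heq] at h
  exact h

lemma measure_eq_of_prod_eq {μ ν : Measure (ℝ × ℝ)} [IsFiniteMeasure μ] [IsFiniteMeasure ν]
    (huniv : μ Set.univ = ν Set.univ)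
    (h : ∀ A B : Set ℝ, MeasurableSet A → MeasurableSet B → μ (A ×ˢ B) = ν (A ×ˢ B)) :
    μ = ν := by
  refine ext_of_generate_finite _ generateFrom_prod.symm isPiSystem_prod ?_ huniv
  rintro _ ⟨A, hA, B, hB, rfl⟩
  exact h A B hA hB

/-- Data processing inequality: If Y and Z are conditionally
independent given X, then the sensitivity functional of the conditional
distributions of Y given Z is at most that of Y given X. -/
theorem stmt10 {Ω : Type*} [MeasurableSpace Ω] (P : Measure Ω) [IsProbabilityMeasure P]
    (X Y Z : Ω → ℝ) (hX : Measurable X) (hY : Measurable Y) (hZ : Measurable Z)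
    (κX : Kernel ℝ ℝ) [IsMarkovKernel κX]
    (hκX : ∀ A B : Set ℝ, MeasurableSet A → MeasurableSet B →
      P.map (fun ω => (X ω, Y ω)) (A ×ˢ B) = ∫⁻ x in A, κX x B ∂(P.map X))
    (κZ : Kernel ℝ ℝ) [IsMarkovKernel κZ]
    (hκZ : ∀ A B : Set ℝ, MeasurableSet A → MeasurableSet B →
      P.map (fun ω => (Z ω, Y ω)) (A ×ˢ B) = ∫⁻ z in A, κZ z B ∂(P.map Z))
    (hCI : ∀ B C : Set ℝ, MeasurableSet B → MeasurableSet C →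
      P[fun ω => Set.indicator B (fun _ => (1 : ℝ)) (Y ω) *
          Set.indicator C (fun _ => (1 : ℝ)) (Z ω)
        | MeasurableSpace.comap X Real.measurableSpace]
      =ᵐ[P] fun ω =>
        (P[fun ω' => Set.indicator B (fun _ => (1 : ℝ)) (Y ω')
            | MeasurableSpace.comap X Real.measurableSpace]) ω *
        (P[fun ω' => Set.indicator C (fun _ => (1 : ℝ)) (Z ω')
            | MeasurableSpace.comap X Real.measurableSpace]) ω)
    (φ : ℝ → ℝ) (hφ : ConvexOn ℝ (Set.Icc (-1 : ℝ) 1) φ) :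
    ∫ z : ℝ × ℝ, (∫ y, φ ((κZ z.1 (Set.Iic y)).toReal - (κZ z.2 (Set.Iic y)).toReal)
          ∂(P.map Y)) ∂((P.map Z).prod (P.map Z)) ≤
      ∫ x : ℝ × ℝ, (∫ y, φ ((κX x.1 (Set.Iic y)).toReal - (κX x.2 (Set.Iic y)).toReal)
          ∂(P.map Y)) ∂((P.map X).prod (P.map X)) := by
  have hXY : Measurable fun ω => (X ω, Y ω) := hX.prodMk hY
  have hZY : Measurable fun ω => (Z ω, Y ω) := hZ.prodMk hY
  have hZX : Measurable fun ω => (Z ω, X ω) := hZ.prodMk hX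
  haveI : IsProbabilityMeasure (P.map X) := Measure.isProbabilityMeasure_map hX.aemeasurable
  haveI : IsProbabilityMeasure (P.map Y) := Measure.isProbabilityMeasure_map hY.aemeasurable
  haveI : IsProbabilityMeasure (P.map Z) := Measure.isProbabilityMeasure_map hZ.aemeasurable
  haveI : IsProbabilityMeasure (P.map fun ω => (X ω, Y ω)) :=
    Measure.isProbabilityMeasure_map hXY.aemeasurable
  haveI : IsProbabilityMeasure (P.map fun ω => (Z ω, Y ω)) :=
    Measure.isProbabilityMeasure_map hZY.aemeasurable
  haveI : IsProbabilityMeasure (P.map fun ω => (Z ω, X ω)) :=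
    Measure.isProbabilityMeasure_map hZX.aemeasurable
  have hmX := hX.comap_le
  -- disintegration identities
  have h1 : P.map (fun ω => (X ω, Y ω)) = (P.map X) ⊗ₘ κX := by
    refine measure_eq_of_prod_eq ?_ ?_
    · rw [Measure.compProd_apply_univ]; simp
    · intro A B hA hB
      rw [hκX A B hA hB, Measure.compProd_apply_prod hA hB]
  have h2 : P.map (fun ω => (Z ω, Y ω)) = (P.map Z) ⊗ₘ κZ := by
    refine measure_eq_of_prod_eq ?_ ?_
    · rw [Measure.compProd_apply_univ]; simp
    · intro A B hA hB
      rw [hκZ A B hA hB, Measure.compProd_apply_prod hA hB]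
  set η := condDistrib X Z P with hηdef
  have h3 : (P.map Z) ⊗ₘ η = P.map (fun ω => (Z ω, X ω)) := by
    have hfst : (P.map (fun ω => (Z ω, X ω))).fst = P.map Z := Measure.fst_map_prodMk hX
    rw [hηdef]
    exact compProd_map_condDistrib hX.aemeasurable
  set κ' : Kernel ℝ ℝ := κX ∘ₖ η with hκ'def
  have h4 : P.map (fun ω => (Z ω, Y ω)) = (P.map Z) ⊗ₘ κ' := by
    haveI : SigmaFinite (P.trim hmX) := by infer_instance
    refine measure_eq_of_prod_eq ?_ ?_
    · rw [Measure.compProd_apply_univ]; simp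
    intro A B hA hB
    -- LHS
    have hL : P.map (fun ω => (Z ω, Y ω)) (A ×ˢ B) = P (Z ⁻¹' A ∩ Y ⁻¹' B) := by
      rw [Measure.map_apply hZY (hA.prod hB)]
      rfl
    -- RHS
    have hR : ((P.map Z) ⊗ₘ κ') (A ×ˢ B) = ∫⁻ ω in Z ⁻¹' A, κX (X ω) B ∂P := by
      rw [Measure.compProd_apply_prod hA hB]
      have hmeas2 : Measurable fun p : ℝ × ℝ => κX p.2 B :=
        (Kernel.measurable_coe κX hB).comp measurable_snd
      calc ∫⁻ z in A, κ' z B ∂(P.map Z)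
          = ∫⁻ z in A, ∫⁻ x, κX x B ∂η z ∂(P.map Z) :=
            setLIntegral_congr_fun hA (fun z _ =>
              Kernel.comp_apply' _ _ _ hB)
        _ = ∫⁻ p in A ×ˢ Set.univ, κX p.2 B ∂((P.map Z) ⊗ₘ η) := by
            rw [Measure.setLIntegral_compProd hmeas2 hA MeasurableSet.univ]
            simp [Measure.restrict_univ]
        _ = ∫⁻ ω in (fun ω => (Z ω, X ω)) ⁻¹' (A ×ˢ Set.univ), κX (X ω) B ∂P := by
            rw [h3, setLIntegral_map (hA.prod MeasurableSet.univ) hmeas2 hZX]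
        _ = ∫⁻ ω in Z ⁻¹' A, κX (X ω) B ∂P := by
            have hpre : (fun ω => (Z ω, X ω)) ⁻¹' (A ×ˢ Set.univ) = Z ⁻¹' A := by
              ext ω; simp
            rw [hpre]
    rw [hL, hR]
    -- finiteness
    have hfin1 : P (Z ⁻¹' A ∩ Y ⁻¹' B) ≠ ⊤ := measure_ne_top _ _
    have hfin2 : (∫⁻ ω in Z ⁻¹' A, κX (X ω) B ∂P) ≠ ⊤ := by
      refine ne_top_of_le_ne_top (by simp : (P.restrict (Z ⁻¹' A)) Set.univ ≠ ⊤) ?_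
      calc ∫⁻ ω in Z ⁻¹' A, κX (X ω) B ∂P ≤ ∫⁻ _ in Z ⁻¹' A, 1 ∂P :=
            lintegral_mono fun ω => prob_le_one
        _ = (P.restrict (Z ⁻¹' A)) Set.univ := by simp
    refine (ENNReal.toReal_eq_toReal_iff' hfin1 hfin2).mp ?_
    -- measurability and integrability facts
    have hfBmeas : Measurable fun ω => (κX (X ω) B).toReal :=
      ((Kernel.measurable_coe κX hB).comp hX).ennreal_toReal
    have hfBsm : StronglyMeasurable[MeasurableSpace.comap X Real.measurableSpace]
        fun ω => (κX (X ω) B).toReal :=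
      (((Kernel.measurable_coe κX hB).comp (Measurable.of_comap_le le_rfl)).ennreal_toReal).stronglyMeasurable
    have hfBbd : ∀ ω, |(κX (X ω) B).toReal| ≤ 1 := fun ω => by
      have := kernel_toReal_mem_Icc κX (X ω) B
      rw [abs_le]; exact ⟨by linarith [this.1], this.2⟩
    have hg1eq : (fun ω => Set.indicator B (fun _ => (1:ℝ)) (Y ω))
        = (Y ⁻¹' B).indicator (fun _ => (1:ℝ)) := by
      funext ω; by_cases h : Y ω ∈ B <;> simp [h]
    have hgAeq : (fun ω => Set.indicator A (fun _ => (1:ℝ)) (Z ω))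
        = (Z ⁻¹' A).indicator (fun _ => (1:ℝ)) := by
      funext ω; by_cases h : Z ω ∈ A <;> simp [h]
    have hg1meas : Measurable fun ω => Set.indicator B (fun _ => (1:ℝ)) (Y ω) := by
      rw [hg1eq]; exact measurable_const.indicator (hY hB)
    have hgAmeas : Measurable fun ω => Set.indicator A (fun _ => (1:ℝ)) (Z ω) := by
      rw [hgAeq]; exact measurable_const.indicator (hZ hA)
    have hg1bd : ∀ ω, |Set.indicator B (fun _ => (1:ℝ)) (Y ω)| ≤ 1 := fun ω => by
      by_cases h : Y ω ∈ B <;> simp [h]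
    have hgAbd : ∀ ω, |Set.indicator A (fun _ => (1:ℝ)) (Z ω)| ≤ 1 := fun ω => by
      by_cases h : Z ω ∈ A <;> simp [h]
    have hint1 : Integrable (fun ω => Set.indicator B (fun _ => (1:ℝ)) (Y ω) *
        Set.indicator A (fun _ => (1:ℝ)) (Z ω)) P :=
      integrable_of_bound (hg1meas.mul hgAmeas).aestronglyMeasurable 1 (fun ω => by
        rw [abs_mul]
        calc |Set.indicator B (fun _ => (1:ℝ)) (Y ω)| * |Set.indicator A (fun _ => (1:ℝ)) (Z ω)|
            ≤ 1 * 1 := mul_le_mul (hg1bd ω) (hgAbd ω) (abs_nonneg _) zero_le_one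
          _ = 1 := by norm_num)
    have hintgA : Integrable (fun ω => Set.indicator A (fun _ => (1:ℝ)) (Z ω)) P :=
      integrable_of_bound hgAmeas.aestronglyMeasurable 1 hgAbd
    have hint2 : Integrable (fun ω => (κX (X ω) B).toReal *
        Set.indicator A (fun _ => (1:ℝ)) (Z ω)) P :=
      integrable_of_bound (hfBmeas.mul hgAmeas).aestronglyMeasurable 1 (fun ω => by
        rw [abs_mul]
        calc |(κX (X ω) B).toReal| * |Set.indicator A (fun _ => (1:ℝ)) (Z ω)|
            ≤ 1 * 1 := mul_le_mul (hfBbd ω) (hgAbd ω) (abs_nonneg _) zero_le_one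
          _ = 1 := by norm_num)
    -- identification of κX with condDistrib Y X P
    have hXae : ∀ᵐ x ∂(P.map X), κX x = condDistrib Y X P x :=
      (condDistrib_ae_eq_of_measure_eq_compProd_of_measurable hX hY h1).symm
    have hXae' : ∀ᵐ ω ∂P, κX (X ω) = condDistrib Y X P (X ω) :=
      ae_of_ae_map hX.aemeasurable hXae
    have hcd := condDistrib_ae_eq_condExp (μ := P) hX hY hB
    have r4 : P[fun ω' => Set.indicator B (fun _ => (1:ℝ)) (Y ω')
        | MeasurableSpace.comap X Real.measurableSpace]
        =ᵐ[P] fun ω => (κX (X ω) B).toReal := by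
      have ha : P[fun ω' => Set.indicator B (fun _ => (1:ℝ)) (Y ω')
          | MeasurableSpace.comap X Real.measurableSpace]
          =ᵐ[P] P[(Y ⁻¹' B).indicator (fun _ => (1:ℝ))
          | MeasurableSpace.comap X Real.measurableSpace] :=
        condExp_congr_ae (Filter.Eventually.of_forall fun ω => by
          by_cases h : Y ω ∈ B <;> simp [h])
      have hb : (fun ω => (condDistrib Y X P (X ω) B).toReal)
          =ᵐ[P] fun ω => (κX (X ω) B).toReal := by
        filter_upwards [hXae'] with ω h; rw [h]
      exact ha.trans (hcd.symm.trans hb)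
    -- pull-out property
    have hpull := condExp_mul_of_stronglyMeasurable_left (μ := P) hfBsm
      (by
        have : ((fun ω => (κX (X ω) B).toReal) *
            fun ω => Set.indicator A (fun _ => (1:ℝ)) (Z ω)) = fun ω =>
            (κX (X ω) B).toReal * Set.indicator A (fun _ => (1:ℝ)) (Z ω) := rfl
        rw [this]; exact hint2)
      hintgA
    -- now the two real chains
    have chainL : (P (Z ⁻¹' A ∩ Y ⁻¹' B)).toReal
        = ∫ ω, (κX (X ω) B).toReal *
            (P[fun ω' => Set.indicator A (fun _ => (1:ℝ)) (Z ω')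
              | MeasurableSpace.comap X Real.measurableSpace]) ω ∂P := by
      calc (P (Z ⁻¹' A ∩ Y ⁻¹' B)).toReal
          = ∫ ω, Set.indicator B (fun _ => (1:ℝ)) (Y ω) *
              Set.indicator A (fun _ => (1:ℝ)) (Z ω) ∂P := by
            rw [← Measure.real_def, ← integral_indicator_one ((hZ hA).inter (hY hB))]
            refine integral_congr_ae (Filter.Eventually.of_forall fun ω => ?_)
            by_cases h1 : Z ω ∈ A <;> by_cases h2 : Y ω ∈ B <;>
              simp [Set.indicator_apply, h1, h2]
        _ = ∫ ω, (P[fun ω' => Set.indicator B (fun _ => (1:ℝ)) (Y ω') *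
              Set.indicator A (fun _ => (1:ℝ)) (Z ω')
              | MeasurableSpace.comap X Real.measurableSpace]) ω ∂P :=
            (integral_condExp hmX).symm
        _ = ∫ ω, (P[fun ω' => Set.indicator B (fun _ => (1:ℝ)) (Y ω')
              | MeasurableSpace.comap X Real.measurableSpace]) ω *
              (P[fun ω' => Set.indicator A (fun _ => (1:ℝ)) (Z ω')
              | MeasurableSpace.comap X Real.measurableSpace]) ω ∂P :=
            integral_congr_ae (hCI B A hB hA)
        _ = ∫ ω, (κX (X ω) B).toReal *
              (P[fun ω' => Set.indicator A (fun _ => (1:ℝ)) (Z ω')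
              | MeasurableSpace.comap X Real.measurableSpace]) ω ∂P := by
            refine integral_congr_ae ?_
            filter_upwards [r4] with ω h
            rw [h]
    have chainR : (∫⁻ ω in Z ⁻¹' A, κX (X ω) B ∂P).toReal
        = ∫ ω, (κX (X ω) B).toReal *
            (P[fun ω' => Set.indicator A (fun _ => (1:ℝ)) (Z ω')
              | MeasurableSpace.comap X Real.measurableSpace]) ω ∂P := by
      calc (∫⁻ ω in Z ⁻¹' A, κX (X ω) B ∂P).toReal
          = ∫ ω in Z ⁻¹' A, (κX (X ω) B).toReal ∂P :=
            (integral_toReal (((Kernel.measurable_coe κX hB).comp hX).aemeasurable.restrict)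
              (Filter.Eventually.of_forall fun ω => measure_lt_top _ _)).symm
        _ = ∫ ω, (κX (X ω) B).toReal * Set.indicator A (fun _ => (1:ℝ)) (Z ω) ∂P := by
            rw [← integral_indicator (hZ hA)]
            refine integral_congr_ae (Filter.Eventually.of_forall fun ω => ?_)
            by_cases h : Z ω ∈ A <;> simp [Set.indicator_apply, h]
        _ = ∫ ω, (P[fun ω' => (κX (X ω') B).toReal *
              Set.indicator A (fun _ => (1:ℝ)) (Z ω')
              | MeasurableSpace.comap X Real.measurableSpace]) ω ∂P :=
            (integral_condExp hmX).symm
        _ = ∫ ω, (κX (X ω) B).toReal *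
              (P[fun ω' => Set.indicator A (fun _ => (1:ℝ)) (Z ω')
              | MeasurableSpace.comap X Real.measurableSpace]) ω ∂P := by
            refine integral_congr_ae ?_
            filter_upwards [hpull] with ω h
            exact h
    rw [chainL, chainR]
  have h5 : ∀ᵐ z ∂(P.map Z), κZ z = κ' z := by
    have ha := condDistrib_ae_eq_of_measure_eq_compProd_of_measurable hZ hY h2
    have hb := condDistrib_ae_eq_of_measure_eq_compProd_of_measurable hZ hY h4
    filter_upwards [ha, hb] with z h h'
    rw [← h, h']
  -- Analytic part
  obtain ⟨C, hC0, hCb⟩ := convexOn_Icc_bounded hφ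
  obtain ⟨ψ, hψm, hψφ⟩ := convexOn_Icc_exists_measurable hφ
  have hψb : ∀ t ∈ Set.Icc (-1:ℝ) 1, |ψ t| ≤ C := fun t ht => by
    rw [hψφ t ht]; exact hCb t ht
  have mX2 : Measurable fun p : ℝ × ℝ => (κX p.1 (Set.Iic p.2)).toReal :=
    (measurable_kernel_Iic κX).ennreal_toReal
  have mZ2 : Measurable fun p : ℝ × ℝ => (κZ p.1 (Set.Iic p.2)).toReal :=
    (measurable_kernel_Iic κZ).ennreal_toReal
  have memX : ∀ x y : ℝ, (κX x (Set.Iic y)).toReal ∈ Set.Icc (0:ℝ) 1 :=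
    fun x y => kernel_toReal_mem_Icc κX x _
  have memZ : ∀ z y : ℝ, (κZ z (Set.Iic y)).toReal ∈ Set.Icc (0:ℝ) 1 :=
    fun z y => kernel_toReal_mem_Icc κZ z _
  -- the function G
  set G : ℝ × ℝ → ℝ := fun x =>
    ∫ y, ψ ((κX x.1 (Set.Iic y)).toReal - (κX x.2 (Set.Iic y)).toReal) ∂(P.map Y) with hGdef
  have hdXmeas : Measurable fun q : (ℝ × ℝ) × ℝ =>
      ψ ((κX q.1.1 (Set.Iic q.2)).toReal - (κX q.1.2 (Set.Iic q.2)).toReal) :=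
    hψm.comp ((mX2.comp (measurable_fst.fst.prodMk measurable_snd)).sub
      (mX2.comp (measurable_fst.snd.prodMk measurable_snd)))
  have hGsm : StronglyMeasurable G := hdXmeas.stronglyMeasurable.integral_prod_right'
  have hGbd : ∀ x, |G x| ≤ C := fun x => abs_integral_le_bound _
    (fun y => hψb _ (sub_mem_Icc_of_mem_Icc01 (memX _ _) (memX _ _)))
  -- the kernel ζ
  set ζ : Kernel (ℝ × ℝ) (ℝ × ℝ) := (η.comap (Prod.fst : ℝ × ℝ → ℝ) measurable_fst) ×ₖ
    (η.comap (Prod.snd : ℝ × ℝ → ℝ) measurable_snd) with hζdef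
  have hζap : ∀ zp : ℝ × ℝ, ζ zp = (η zp.1).prod (η zp.2) := fun zp => by
    rw [hζdef, Kernel.prod_apply, Kernel.comap_apply, Kernel.comap_apply]
  set Hf : ℝ × ℝ → ℝ := fun zp => ∫ x, G x ∂(ζ zp) with hHdef
  have hHsm : StronglyMeasurable Hf := by
    refine StronglyMeasurable.integral_kernel_prod_right (κ := ζ) (f := fun _ x => G x) ?_
    exact hGsm.comp_measurable measurable_snd
  have hHbd : ∀ zp, |Hf zp| ≤ C := fun zp => abs_integral_le_bound _ (fun x => hGbd x)
  -- rewrite φ to ψ in the goal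
  have hgoalZ : ∀ z : ℝ × ℝ,
      (∫ y, φ ((κZ z.1 (Set.Iic y)).toReal - (κZ z.2 (Set.Iic y)).toReal) ∂(P.map Y))
      = ∫ y, ψ ((κZ z.1 (Set.Iic y)).toReal - (κZ z.2 (Set.Iic y)).toReal) ∂(P.map Y) :=
    fun z => integral_congr_ae (Filter.Eventually.of_forall fun y =>
      (hψφ _ (sub_mem_Icc_of_mem_Icc01 (memZ _ _) (memZ _ _))).symm)
  have hgoalX : ∀ x : ℝ × ℝ,
      (∫ y, φ ((κX x.1 (Set.Iic y)).toReal - (κX x.2 (Set.Iic y)).toReal) ∂(P.map Y))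
      = G x :=
    fun x => integral_congr_ae (Filter.Eventually.of_forall fun y =>
      (hψφ _ (sub_mem_Icc_of_mem_Icc01 (memX _ _) (memX _ _))).symm)
  -- pointwise (a.e.) inequality
  have h51 : ∀ᵐ zp : ℝ × ℝ ∂((P.map Z).prod (P.map Z)), κZ zp.1 = κ' zp.1 := by
    refine ae_of_ae_map (p := fun z => κZ z = κ' z)
      (measurable_fst.aemeasurable :
        AEMeasurable (Prod.fst : ℝ × ℝ → ℝ) ((P.map Z).prod (P.map Z))) ?_
    rw [show ((P.map Z).prod (P.map Z)).map Prod.fst = ((P.map Z).prod (P.map Z)).fst from rfl,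
      Measure.fst_prod]
    exact h5
  have h52 : ∀ᵐ zp : ℝ × ℝ ∂((P.map Z).prod (P.map Z)), κZ zp.2 = κ' zp.2 := by
    refine ae_of_ae_map (p := fun z => κZ z = κ' z)
      (measurable_snd.aemeasurable :
        AEMeasurable (Prod.snd : ℝ × ℝ → ℝ) ((P.map Z).prod (P.map Z))) ?_
    rw [show ((P.map Z).prod (P.map Z)).map Prod.snd = ((P.map Z).prod (P.map Z)).snd from rfl,
      Measure.snd_prod]
    exact h5
  have hptwise : ∀ᵐ zp : ℝ × ℝ ∂((P.map Z).prod (P.map Z)),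
      (∫ y, ψ ((κZ zp.1 (Set.Iic y)).toReal - (κZ zp.2 (Set.Iic y)).toReal) ∂(P.map Y))
        ≤ Hf zp := by
    filter_upwards [h51, h52] with zp e1 e2
    -- per-y Jensen
    have key : ∀ y : ℝ, ψ ((κZ zp.1 (Set.Iic y)).toReal - (κZ zp.2 (Set.Iic y)).toReal)
        ≤ ∫ x : ℝ × ℝ, ψ ((κX x.1 (Set.Iic y)).toReal - (κX x.2 (Set.Iic y)).toReal) ∂(ζ zp) := by
      intro y
      have hrw1 : (κZ zp.1 (Set.Iic y)).toReal
          = ∫ x, (κX x (Set.Iic y)).toReal ∂η zp.1 := by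
        rw [e1, hκ'def, Kernel.comp_apply' _ _ _ measurableSet_Iic,
          integral_toReal ((Kernel.measurable_coe κX measurableSet_Iic).aemeasurable)
            (Filter.Eventually.of_forall fun x => measure_lt_top _ _)]
      have hrw2 : (κZ zp.2 (Set.Iic y)).toReal
          = ∫ x, (κX x (Set.Iic y)).toReal ∂η zp.2 := by
        rw [e2, hκ'def, Kernel.comp_apply' _ _ _ measurableSet_Iic,
          integral_toReal ((Kernel.measurable_coe κX measurableSet_Iic).aemeasurable)
            (Filter.Eventually.of_forall fun x => measure_lt_top _ _)]
      have hb1 : ∀ x : ℝ, |(κX x (Set.Iic y)).toReal| ≤ 1 := fun x => by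
        have := memX x y; rw [abs_le]; exact ⟨by linarith [this.1], this.2⟩
      have hmeas1 : Measurable fun x : ℝ => (κX x (Set.Iic y)).toReal :=
        (Kernel.measurable_coe κX measurableSet_Iic).ennreal_toReal
      have int1 : Integrable (fun x : ℝ × ℝ => (κX x.1 (Set.Iic y)).toReal)
          ((η zp.1).prod (η zp.2)) :=
        integrable_of_bound (hmeas1.comp measurable_fst).aestronglyMeasurable 1 (fun x => hb1 _)
      have int2 : Integrable (fun x : ℝ × ℝ => (κX x.2 (Set.Iic y)).toReal)
          ((η zp.1).prod (η zp.2)) :=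
        integrable_of_bound (hmeas1.comp measurable_snd).aestronglyMeasurable 1 (fun x => hb1 _)
      have hdiff : (κZ zp.1 (Set.Iic y)).toReal - (κZ zp.2 (Set.Iic y)).toReal
          = ∫ x : ℝ × ℝ, ((κX x.1 (Set.Iic y)).toReal - (κX x.2 (Set.Iic y)).toReal) ∂(ζ zp) := by
        rw [hζap, hrw1, hrw2, integral_sub int1 int2]
        congr 1
        · rw [MeasureTheory.integral_prod _ int1]
          simp
        · rw [MeasureTheory.integral_prod _ int2]
          simp
      have hmemdiff : ∀ x : ℝ × ℝ,
          (κX x.1 (Set.Iic y)).toReal - (κX x.2 (Set.Iic y)).toReal ∈ Set.Icc (-1:ℝ) 1 :=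
        fun x => sub_mem_Icc_of_mem_Icc01 (memX _ _) (memX _ _)
      have hgmeas : Measurable fun x : ℝ × ℝ =>
          (κX x.1 (Set.Iic y)).toReal - (κX x.2 (Set.Iic y)).toReal :=
        (hmeas1.comp measurable_fst).sub (hmeas1.comp measurable_snd)
      have hgint : Integrable (fun x : ℝ × ℝ =>
          (κX x.1 (Set.Iic y)).toReal - (κX x.2 (Set.Iic y)).toReal) (ζ zp) :=
        integrable_of_bound hgmeas.aestronglyMeasurable 1 (fun x => by
          have := hmemdiff x; rw [abs_le]; exact ⟨this.1, this.2⟩)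
      have hφgint : Integrable (fun x : ℝ × ℝ =>
          φ ((κX x.1 (Set.Iic y)).toReal - (κX x.2 (Set.Iic y)).toReal)) (ζ zp) := by
        have heqfun : (fun x : ℝ × ℝ =>
            φ ((κX x.1 (Set.Iic y)).toReal - (κX x.2 (Set.Iic y)).toReal))
            = fun x : ℝ × ℝ =>
            ψ ((κX x.1 (Set.Iic y)).toReal - (κX x.2 (Set.Iic y)).toReal) :=
          funext fun x => (hψφ _ (hmemdiff x)).symm
        rw [heqfun]
        exact integrable_of_bound (hψm.comp hgmeas).aestronglyMeasurable C
          (fun x => hψb _ (hmemdiff x))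
      have hjen := convexOn_Icc_map_integral_le (ζ zp) hφ hmemdiff hgint hφgint
      calc ψ ((κZ zp.1 (Set.Iic y)).toReal - (κZ zp.2 (Set.Iic y)).toReal)
          = φ ((κZ zp.1 (Set.Iic y)).toReal - (κZ zp.2 (Set.Iic y)).toReal) :=
            hψφ _ (sub_mem_Icc_of_mem_Icc01 (memZ _ _) (memZ _ _))
        _ = φ (∫ x : ℝ × ℝ, ((κX x.1 (Set.Iic y)).toReal - (κX x.2 (Set.Iic y)).toReal)
              ∂(ζ zp)) := by rw [← hdiff]
        _ ≤ ∫ x : ℝ × ℝ, φ ((κX x.1 (Set.Iic y)).toReal - (κX x.2 (Set.Iic y)).toReal)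
              ∂(ζ zp) := hjen
        _ = ∫ x : ℝ × ℝ, ψ ((κX x.1 (Set.Iic y)).toReal - (κX x.2 (Set.Iic y)).toReal)
              ∂(ζ zp) := integral_congr_ae (Filter.Eventually.of_forall fun x =>
                (hψφ _ (hmemdiff x)).symm)
    -- integrate the per-y inequality
    have hdZmeas : Measurable fun y : ℝ =>
        ψ ((κZ zp.1 (Set.Iic y)).toReal - (κZ zp.2 (Set.Iic y)).toReal) :=
      hψm.comp ((mZ2.comp (measurable_const.prodMk measurable_id)).sub
        (mZ2.comp (measurable_const.prodMk measurable_id)))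
    have intL : Integrable (fun y : ℝ =>
        ψ ((κZ zp.1 (Set.Iic y)).toReal - (κZ zp.2 (Set.Iic y)).toReal)) (P.map Y) :=
      integrable_of_bound hdZmeas.aestronglyMeasurable C
        (fun y => hψb _ (sub_mem_Icc_of_mem_Icc01 (memZ _ _) (memZ _ _)))
    have hswapmeas : StronglyMeasurable fun q : ℝ × (ℝ × ℝ) =>
        ψ ((κX q.2.1 (Set.Iic q.1)).toReal - (κX q.2.2 (Set.Iic q.1)).toReal) :=
      (hψm.comp ((mX2.comp (measurable_snd.fst.prodMk measurable_fst)).sub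
        (mX2.comp (measurable_snd.snd.prodMk measurable_fst)))).stronglyMeasurable
    have intR : Integrable (fun y : ℝ => ∫ x : ℝ × ℝ,
        ψ ((κX x.1 (Set.Iic y)).toReal - (κX x.2 (Set.Iic y)).toReal) ∂(ζ zp)) (P.map Y) :=
      integrable_of_bound (hswapmeas.integral_prod_right').aestronglyMeasurable C
        (fun y => abs_integral_le_bound _
          (fun x => hψb _ (sub_mem_Icc_of_mem_Icc01 (memX _ _) (memX _ _))))
    have hmono := integral_mono intL intR key
    have hswap : (∫ y, (∫ x : ℝ × ℝ,
          ψ ((κX x.1 (Set.Iic y)).toReal - (κX x.2 (Set.Iic y)).toReal) ∂(ζ zp)) ∂(P.map Y))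
        = ∫ x : ℝ × ℝ, (∫ y,
          ψ ((κX x.1 (Set.Iic y)).toReal - (κX x.2 (Set.Iic y)).toReal) ∂(P.map Y)) ∂(ζ zp) := by
      refine integral_integral_swap ?_
      refine integrable_of_bound hswapmeas.aestronglyMeasurable C ?_
      exact fun q => hψb _ (sub_mem_Icc_of_mem_Icc01 (memX _ _) (memX _ _))
    calc (∫ y, ψ ((κZ zp.1 (Set.Iic y)).toReal - (κZ zp.2 (Set.Iic y)).toReal) ∂(P.map Y))
        ≤ ∫ y, (∫ x : ℝ × ℝ,
            ψ ((κX x.1 (Set.Iic y)).toReal - (κX x.2 (Set.Iic y)).toReal) ∂(ζ zp))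
            ∂(P.map Y) := hmono
      _ = ∫ x : ℝ × ℝ, G x ∂(ζ zp) := hswap
      _ = Hf zp := rfl
  -- integrability of both sides over (P.map Z).prod (P.map Z)
  have hLHSsm : StronglyMeasurable fun zp : ℝ × ℝ => ∫ y,
      ψ ((κZ zp.1 (Set.Iic y)).toReal - (κZ zp.2 (Set.Iic y)).toReal) ∂(P.map Y) := by
    refine StronglyMeasurable.integral_prod_right' (f := fun q : (ℝ × ℝ) × ℝ =>
      ψ ((κZ q.1.1 (Set.Iic q.2)).toReal - (κZ q.1.2 (Set.Iic q.2)).toReal)) ?_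
    exact (hψm.comp ((mZ2.comp (measurable_fst.fst.prodMk measurable_snd)).sub
      (mZ2.comp (measurable_fst.snd.prodMk measurable_snd)))).stronglyMeasurable
  have hintLHS : Integrable (fun zp : ℝ × ℝ => ∫ y,
      ψ ((κZ zp.1 (Set.Iic y)).toReal - (κZ zp.2 (Set.Iic y)).toReal) ∂(P.map Y))
      ((P.map Z).prod (P.map Z)) :=
    integrable_of_bound hLHSsm.aestronglyMeasurable C (fun zp => abs_integral_le_bound _
      (fun y => hψb _ (sub_mem_Icc_of_mem_Icc01 (memZ _ _) (memZ _ _))))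
  have hintH : Integrable Hf ((P.map Z).prod (P.map Z)) :=
    integrable_of_bound hHsm.aestronglyMeasurable C hHbd
  -- the mixture identity
  have hmix : ∀ g : ℝ → ℝ, Measurable g → (∀ x, |g x| ≤ C) →
      ∫ z, (∫ x, g x ∂η z) ∂(P.map Z) = ∫ x, g x ∂(P.map X) := by
    intro g hg hb
    have hintc : Integrable (fun p : ℝ × ℝ => g p.2) ((P.map Z) ⊗ₘ η) :=
      integrable_of_bound (hg.comp measurable_snd).aestronglyMeasurable C (fun p => hb p.2)
    calc ∫ z, (∫ x, g x ∂η z) ∂(P.map Z)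
        = ∫ p : ℝ × ℝ, g p.2 ∂((P.map Z) ⊗ₘ η) := (Measure.integral_compProd hintc).symm
      _ = ∫ ω, g (X ω) ∂P := by
          rw [h3, integral_map hZX.aemeasurable]
          exact (hg.comp measurable_snd).aestronglyMeasurable
      _ = ∫ x, g x ∂(P.map X) := (integral_map hX.aemeasurable hg.aestronglyMeasurable).symm
  -- the final identity
  have hintGprod : ∀ μ₁ μ₂ : Measure ℝ, IsProbabilityMeasure μ₁ → IsProbabilityMeasure μ₂ →
      Integrable G (μ₁.prod μ₂) := by
    intro μ₁ μ₂ h₁ h₂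
    exact integrable_of_bound hGsm.aestronglyMeasurable C hGbd
  have hGPXmeas : Measurable fun x₁ : ℝ => ∫ x₂, G (x₁, x₂) ∂(P.map X) :=
    (hGsm.integral_prod_right').measurable
  have hGPXbd : ∀ x₁, |∫ x₂, G (x₁, x₂) ∂(P.map X)| ≤ C :=
    fun x₁ => abs_integral_le_bound _ fun x₂ => hGbd _
  have step1 : ∀ z₁ : ℝ, ∫ z₂, Hf (z₁, z₂) ∂(P.map Z)
      = ∫ x₁, (∫ x₂, G (x₁, x₂) ∂(P.map X)) ∂η z₁ := by
    intro z₁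
    have hHrw : ∀ z₂ : ℝ, Hf (z₁, z₂) = ∫ x₁, (∫ x₂, G (x₁, x₂) ∂η z₂) ∂η z₁ := by
      intro z₂
      show ∫ x, G x ∂(ζ (z₁, z₂)) = _
      rw [hζap (z₁, z₂)]
      exact MeasureTheory.integral_prod G (hintGprod _ _ inferInstance inferInstance)
    have hinnersm : StronglyMeasurable fun q : ℝ × ℝ => ∫ x₂, G (q.2, x₂) ∂η q.1 := by
      set ηf : Kernel (ℝ × ℝ) ℝ := η.comap (Prod.fst : ℝ × ℝ → ℝ) measurable_fst with hηf
      have h0 : StronglyMeasurable fun q : ℝ × ℝ => ∫ x₂, G (q.2, x₂) ∂(ηf q) := by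
        refine StronglyMeasurable.integral_kernel_prod_right
          (κ := ηf) (f := fun q x₂ => G (q.2, x₂)) ?_
        exact hGsm.comp_measurable (measurable_fst.snd.prodMk measurable_snd)
      have heq : (fun q : ℝ × ℝ => ∫ x₂, G (q.2, x₂) ∂(ηf q))
          = fun q : ℝ × ℝ => ∫ x₂, G (q.2, x₂) ∂η q.1 := by
        funext q; rw [hηf, Kernel.comap_apply]
      rw [heq] at h0
      exact h0
    have hinnerbd : ∀ q : ℝ × ℝ, |∫ x₂, G (q.2, x₂) ∂η q.1| ≤ C :=
      fun q => abs_integral_le_bound _ fun x₂ => hGbd _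
    calc ∫ z₂, Hf (z₁, z₂) ∂(P.map Z)
        = ∫ z₂, ∫ x₁, (∫ x₂, G (x₁, x₂) ∂η z₂) ∂η z₁ ∂(P.map Z) :=
          integral_congr_ae (Filter.Eventually.of_forall fun z₂ => hHrw z₂)
      _ = ∫ x₁, ∫ z₂, (∫ x₂, G (x₁, x₂) ∂η z₂) ∂(P.map Z) ∂η z₁ := by
          refine integral_integral_swap ?_
          exact integrable_of_bound hinnersm.aestronglyMeasurable C hinnerbd
      _ = ∫ x₁, (∫ x₂, G (x₁, x₂) ∂(P.map X)) ∂η z₁ := by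
          refine integral_congr_ae (Filter.Eventually.of_forall fun x₁ => ?_)
          exact hmix (fun x₂ => G (x₁, x₂))
            (hGsm.measurable.comp (measurable_const.prodMk measurable_id))
            (fun x₂ => hGbd _)
  have hfinal : ∫ zp, Hf zp ∂((P.map Z).prod (P.map Z))
      = ∫ x, G x ∂((P.map X).prod (P.map X)) := by
    rw [MeasureTheory.integral_prod Hf hintH]
    calc ∫ z₁, ∫ z₂, Hf (z₁, z₂) ∂(P.map Z) ∂(P.map Z)
        = ∫ z₁, (∫ x₁, (∫ x₂, G (x₁, x₂) ∂(P.map X)) ∂η z₁) ∂(P.map Z) :=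
          integral_congr_ae (Filter.Eventually.of_forall step1)
      _ = ∫ x₁, (∫ x₂, G (x₁, x₂) ∂(P.map X)) ∂(P.map X) := hmix _ hGPXmeas hGPXbd
      _ = ∫ x, G x ∂((P.map X).prod (P.map X)) :=
          (MeasureTheory.integral_prod G (hintGprod _ _ inferInstance inferInstance)).symm
  -- put everything together
  calc ∫ z : ℝ × ℝ, (∫ y, φ ((κZ z.1 (Set.Iic y)).toReal - (κZ z.2 (Set.Iic y)).toReal)
        ∂(P.map Y)) ∂((P.map Z).prod (P.map Z))
      = ∫ z : ℝ × ℝ, (∫ y, ψ ((κZ z.1 (Set.Iic y)).toReal - (κZ z.2 (Set.Iic y)).toReal)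
        ∂(P.map Y)) ∂((P.map Z).prod (P.map Z)) :=
        integral_congr_ae (Filter.Eventually.of_forall fun z => hgoalZ z)
    _ ≤ ∫ zp, Hf zp ∂((P.map Z).prod (P.map Z)) := integral_mono_ae hintLHS hintH hptwise
    _ = ∫ x, G x ∂((P.map X).prod (P.map X)) := hfinal
    _ = ∫ x : ℝ × ℝ, (∫ y, φ ((κX x.1 (Set.Iic y)).toReal - (κX x.2 (Set.Iic y)).toReal)
        ∂(P.map Y)) ∂((P.map X).prod (P.map X)) :=
        (integral_congr_ae (Filter.Eventually.of_forall fun x => hgoalX x)).symm
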